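/- Let a ≥ 1, b ≥ 0, c ≥ 2 be integers such that a and b have different parity (exactly one of a, b is odd), and assume a + b ≥ 3. Then there exists an exact 2-coloring χ of [a+b−1] (the parity coloring) such that there is no x with x + 2 ≤ a+b−1 and χ(x) ≠ χ(x+2), and no x ∈ [a+b−1] with a·x^c + b ≤ a+b−1 and χ(x) = χ(a·x^c + b). Consequently, GR_2(y = x + 2 : y = a·x^c + b) = a + b. -/

import Mathlib

/-- lower bound and exact value, `a` and `b` of different parity.
For integers `a ≥ 1`, `b ≥ 0`, `c ≥ 2` with exactly one of `a`, `b` odd and `a + b ≥ 3`,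
there is an exact `2`-coloring of `[a+b−1]` (the parity coloring) with no rainbow solution
of `y = x + 2` and no monochromatic solution of `y = a·x^c + b`; consequently
`GR_2(y = x + 2 : y = a·x^c + b) = a + b`. -/
theorem stmt_12 (a b c : ℕ) (ha : 1 ≤ a) (hc : 2 ≤ c) (hpar : Odd a ↔ ¬ Odd b)
    (hab : 3 ≤ a + b) :
    (∃ χ : ℕ → Fin 2, (∀ col, ∃ x, 1 ≤ x ∧ x ≤ a + b - 1 ∧ χ x = col) ∧
      (¬ ∃ x, 1 ≤ x ∧ x + 2 ≤ a + b - 1 ∧ χ x ≠ χ (x + 2)) ∧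
      (¬ ∃ x, 1 ≤ x ∧ x ≤ a + b - 1 ∧ a * x ^ c + b ≤ a + b - 1 ∧
        χ x = χ (a * x ^ c + b))) ∧
    IsLeast {N : ℕ | 1 ≤ N ∧ ∀ n, N ≤ n →
      ∀ χ : ℕ → Fin 2, (∀ col, ∃ x, 1 ≤ x ∧ x ≤ n ∧ χ x = col) →
        (∃ x, 1 ≤ x ∧ x + 2 ≤ n ∧ χ x ≠ χ (x + 2)) ∨
        (∃ x, 1 ≤ x ∧ x ≤ n ∧ a * x ^ c + b ≤ n ∧ χ x = χ (a * x ^ c + b))} (a + b) := by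
  -- the parity coloring
  set χ₀ : ℕ → Fin 2 := fun x => if Odd x then 1 else 0 with hχ₀
  have hoddab : Odd (a + b) := by
    rcases Nat.even_or_odd a with haE | haO
    · have hbO : Odd b := by
        by_contra hnb
        exact (Nat.not_odd_iff_even.mpr haE) (hpar.mpr hnb)
      exact haE.add_odd hbO
    · have hbE : Even b := Nat.not_odd_iff_even.mp (hpar.mp haO)
      exact haO.add_even hbE
  -- part 1 facts
  have hsurj : ∀ col, ∃ x, 1 ≤ x ∧ x ≤ a + b - 1 ∧ χ₀ x = col := by
    intro col
    fin_cases col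
    · exact ⟨2, by omega, by omega, by simp [hχ₀]⟩
    · exact ⟨1, le_refl _, by omega, by simp [hχ₀]⟩
  have hnorainbow : ∀ m, ¬ ∃ x, 1 ≤ x ∧ x + 2 ≤ m ∧ χ₀ x ≠ χ₀ (x + 2) := by
    rintro m ⟨x, hx1, hx2, hne⟩
    apply hne
    have : Odd (x + 2) ↔ Odd x := by
      constructor
      · rintro ⟨k, hk⟩; exact ⟨k - 1, by omega⟩
      · rintro ⟨k, hk⟩; exact ⟨k + 1, by omega⟩
    simp [hχ₀, this]
  have hnomono : ¬ ∃ x, 1 ≤ x ∧ x ≤ a + b - 1 ∧ a * x ^ c + b ≤ a + b - 1 ∧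
      χ₀ x = χ₀ (a * x ^ c + b) := by
    rintro ⟨x, hx1, hx2, hle, _⟩
    have h1 : 1 ≤ x ^ c := Nat.one_le_pow _ _ (by omega)
    have : a * 1 ≤ a * x ^ c := Nat.mul_le_mul_left a h1
    omega
  refine ⟨⟨χ₀, hsurj, hnorainbow _, hnomono⟩, ⟨by omega, ?_⟩, ?_⟩
  · -- membership: every n ≥ a + b works
    intro n hn χ _hs
    by_cases hr : ∃ x, 1 ≤ x ∧ x + 2 ≤ n ∧ χ x ≠ χ (x + 2)
    · exact Or.inl hr
    · push_neg at hr
      right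
      -- on odd numbers in [1,n], χ is constant
      have key : ∀ x, 1 ≤ x → x ≤ n → Odd x → χ x = χ 1 := by
        intro x
        induction x using Nat.strong_induction_on with
        | _ x ih =>
          intro hx1 hxn hodd
          rcases eq_or_ne x 1 with rfl | hne
          · rfl
          · obtain ⟨k, hk⟩ := hodd
            have hx3 : 3 ≤ x := by omega
            have h1 : χ (x - 2) = χ ((x - 2) + 2) := hr (x - 2) (by omega) (by omega)
            have h2 : (x - 2) + 2 = x := by omega
            rw [h2] at h1
            rw [← h1]
            exact ih (x - 2) (by omega) (by omega) (by omega) ⟨k - 1, by omega⟩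
      refine ⟨1, le_refl _, by omega, ?_, ?_⟩
      · simp only [one_pow, mul_one]; omega
      · have heq : a * 1 ^ c + b = a + b := by simp
        rw [heq]
        exact (key (a + b) (by omega) (by omega) hoddab).symm
  · -- lower bound
    intro N hN
    by_contra hlt
    push_neg at hlt
    rcases hN.2 (a + b - 1) (by omega) χ₀ hsurj with h | h
    · exact hnorainbow _ h
    · exact hnomono h
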